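/- Assume α₁, α₂, α₃ > 0. Let x : [0,∞) → ℝ³ be differentiable with x'(t) = b(x(t)) for all t ≥ 0 and x(0) ≠ 0. Then there exists a constant c > 0 (depending on x(0)) such that ‖x(t)‖ ≥ c for all t ≥ 0; that is, the origin is a repeller and solutions starting away from the origin stay uniformly bounded away from it. -/

import Mathlib

open scoped RealInnerProductSpace

/-- The cubic Kolmogorov vector field on `ℝ³` (modelled as `EuclideanSpace ℝ (Fin 3)`):
`b(x)₁ = x₁(α₁ − α₁x₁² − (α₁+α₂+d₁)x₂² + d₂x₃²)`,
`b(x)₂ = x₂(α₂ + d₁x₁² − α₂x₂² − (α₂+α₃+d₃)x₃²)`,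
`b(x)₃ = x₃(α₃ − (α₃+α₁+d₂)x₁² + d₃x₂² − α₃x₃²)`. -/
noncomputable def bVF (α₁ α₂ α₃ d₁ d₂ d₃ : ℝ) (x : EuclideanSpace ℝ (Fin 3)) :
    EuclideanSpace ℝ (Fin 3) :=
  (WithLp.equiv 2 (Fin 3 → ℝ)).symm
    ![x 0 * (α₁ - α₁ * (x 0)^2 - (α₁ + α₂ + d₁) * (x 1)^2 + d₂ * (x 2)^2),
      x 1 * (α₂ + d₁ * (x 0)^2 - α₂ * (x 1)^2 - (α₂ + α₃ + d₃) * (x 2)^2),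
      x 2 * (α₃ - (α₃ + α₁ + d₂) * (x 0)^2 + d₃ * (x 1)^2 - α₃ * (x 2)^2)]

lemma inner_bVF (α₁ α₂ α₃ d₁ d₂ d₃ : ℝ) (y : EuclideanSpace ℝ (Fin 3)) :
    ⟪y, bVF α₁ α₂ α₃ d₁ d₂ d₃ y⟫ =
      (1 - ‖y‖^2) * (α₁*(y 0)^2 + α₂*(y 1)^2 + α₃*(y 2)^2) := by
  have hn : ‖y‖^2 = (y 0)^2 + (y 1)^2 + (y 2)^2 := by
    rw [← real_inner_self_eq_norm_sq]
    simp only [PiLp.inner_apply, Fin.sum_univ_three, RCLike.inner_apply, conj_trivial]; ring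
  simp only [bVF, PiLp.inner_apply, Fin.sum_univ_three, WithLp.equiv_symm_apply, PiLp.toLp_apply,
    Matrix.cons_val_zero, Matrix.cons_val_one, Matrix.head_cons,
    Matrix.cons_val_two, Matrix.tail_cons, RCLike.inner_apply, conj_trivial, hn]
  ring


/-- If `αᵢ > 0`, the origin is a repeller: every solution with `x(0) ≠ 0` stays uniformly
bounded away from the origin. -/
theorem origin_repeller (α₁ α₂ α₃ d₁ d₂ d₃ : ℝ)
    (hα₁ : 0 < α₁) (hα₂ : 0 < α₂) (hα₃ : 0 < α₃)
    (x : ℝ → EuclideanSpace ℝ (Fin 3))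
    (hx : ∀ t : ℝ, 0 ≤ t → HasDerivAt x (bVF α₁ α₂ α₃ d₁ d₂ d₃ (x t)) t)
    (h0 : x 0 ≠ 0) :
    ∃ c : ℝ, 0 < c ∧ ∀ t : ℝ, 0 ≤ t → c ≤ ‖x t‖ := by
  set V : ℝ → ℝ := fun t => ‖x t‖^2 with hVdef
  -- derivative of V
  have hV : ∀ t : ℝ, 0 ≤ t → HasDerivAt V
      (2 * ((1 - ‖x t‖^2) * (α₁*(x t 0)^2 + α₂*(x t 1)^2 + α₃*(x t 2)^2))) t := by
    intro t ht
    have h1 := (hx t ht).inner ℝ (hx t ht)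
    have h2 : (fun s => ⟪x s, x s⟫) = V := by
      funext s; exact real_inner_self_eq_norm_sq (x s)
    rw [h2] at h1
    have h3 : (⟪x t, bVF α₁ α₂ α₃ d₁ d₂ d₃ (x t)⟫ + ⟪bVF α₁ α₂ α₃ d₁ d₂ d₃ (x t), x t⟫ : ℝ)
        = 2 * ((1 - ‖x t‖^2) * (α₁*(x t 0)^2 + α₂*(x t 1)^2 + α₃*(x t 2)^2)) := by
      rw [show (⟪bVF α₁ α₂ α₃ d₁ d₂ d₃ (x t), x t⟫ : ℝ)
          = ⟪x t, bVF α₁ α₂ α₃ d₁ d₂ d₃ (x t)⟫ from real_inner_comm _ _, inner_bVF]; ring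
    exact h3 ▸ h1
  have hcont : ∀ t : ℝ, 0 ≤ t → ContinuousAt V t := fun t ht => (hV t ht).continuousAt
  set m : ℝ := min (V 0) 1 with hm
  have hm0 : 0 < m := by
    apply lt_min _ one_pos
    simpa [hVdef] using pow_pos (norm_pos_iff.mpr h0) 2
  have key : ∀ t : ℝ, 0 ≤ t → m ≤ V t := by
    by_contra h
    push_neg at h
    obtain ⟨t₁, ht₁0, ht₁⟩ := h
    have hV0 : m ≤ V 0 := min_le_left _ _
    have ht₁pos : 0 < t₁ := by
      rcases eq_or_lt_of_le ht₁0 with h' | h'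
      · exact absurd ht₁ (by rw [← h']; exact not_lt.mpr hV0)
      · exact h'
    set S : Set ℝ := Set.Icc 0 t₁ ∩ V ⁻¹' Set.Ici m with hS
    have hmem : ∀ t : ℝ, t ∈ S ↔ (t ∈ Set.Icc 0 t₁ ∧ m ≤ V t) := by
      intro t; simp [hS]
    have hScl : IsClosed S := by
      have hco : ContinuousOn V (Set.Icc 0 t₁) := fun t ht =>
        (hcont t ht.1).continuousWithinAt
      exact hco.preimage_isClosed_of_isClosed isClosed_Icc isClosed_Ici
    have hSne : S.Nonempty := ⟨0, (hmem 0).mpr ⟨⟨le_refl 0, le_of_lt ht₁pos⟩, hV0⟩⟩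
    have hSbd : BddAbove S := ⟨t₁, fun t ht => ((hmem t).mp ht).1.2⟩
    obtain ⟨s, hs⟩ : ∃ s : ℝ, s = sSup S := ⟨_, rfl⟩
    have hsS := (hmem s).mp (hs ▸ hScl.csSup_mem hSne hSbd)
    have hs0 : 0 ≤ s := hsS.1.1
    have hst₁ : s ≤ t₁ := hsS.1.2
    have hsV : m ≤ V s := hsS.2
    have hslt : s < t₁ := lt_of_le_of_ne hst₁ (by rintro rfl; exact absurd ht₁ (not_lt.mpr hsV))
    -- on (s, t₁], V < m
    have hVlt : ∀ t, s < t → t ≤ t₁ → V t < m := by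
      intro t hst htt₁
      by_contra h'
      push_neg at h'
      exact absurd (hs ▸ le_csSup hSbd ((hmem t).mpr ⟨⟨le_trans hs0 hst.le, htt₁⟩, h'⟩)) (not_le.mpr hst)
    -- V monotone on [s, t₁]
    have hmono : MonotoneOn V (Set.Icc s t₁) := by
      apply monotoneOn_of_deriv_nonneg (convex_Icc s t₁)
      · exact fun t ht => (hcont t (le_trans hs0 ht.1)).continuousWithinAt
      · intro t ht
        rw [interior_Icc] at ht
        exact ((hV t (le_trans hs0 ht.1.le)).differentiableAt).differentiableWithinAt
      · intro t ht
        rw [interior_Icc] at ht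
        have ht0 : 0 ≤ t := le_trans hs0 ht.1.le
        rw [(hV t ht0).deriv]
        have hVt1 : V t < 1 := lt_of_lt_of_le (hVlt t ht.1 ht.2.le) (min_le_right _ _)
        have : (0:ℝ) ≤ 1 - ‖x t‖^2 := by
          have : ‖x t‖^2 = V t := rfl
          linarith
        positivity
    have := hmono ⟨le_refl s, hst₁⟩ ⟨hslt.le, le_refl t₁⟩ hst₁
    linarith [hVlt t₁ hslt (le_refl t₁)]
  refine ⟨Real.sqrt m, Real.sqrt_pos.mpr hm0, fun t ht => ?_⟩
  calc Real.sqrt m ≤ Real.sqrt (V t) := Real.sqrt_le_sqrt (key t ht)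
    _ = ‖x t‖ := by rw [hVdef]; exact Real.sqrt_sq (norm_nonneg _)
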